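/- Let 𝒞 be a compact subset of ℝⁿ whose convex hull C = conv(𝒞) has nonempty interior. Let F be a uniquely exposed face of C whose barycenter of extreme points is the origin, exposed by the unique halfspace {x : hᵀx ≥ 0} with ‖h‖ = 1. Let ε_ν ↘ 0, let 𝒜_{ε_ν} ⊆ 𝒞 be ε_ν-approximations of 𝒞 and A_{ε_ν} = conv(𝒜_{ε_ν}). Then for all sufficiently small ε_ν, the line span(h) intersects the interior of A_{ε_ν}. -/

import Mathlib

open RealInnerProductSpace Pointwise


lemma isCompact_convexHull_of_isCompact' {n : ℕ} {s : Set (EuclideanSpace ℝ (Fin n))}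
    (hs : IsCompact s) (hne : s.Nonempty) : IsCompact (convexHull ℝ s) := by
  classical
  obtain ⟨c₀, hc₀⟩ := hne
  set φ : (Fin (n+1) → ℝ) × (Fin (n+1) → EuclideanSpace ℝ (Fin n)) → EuclideanSpace ℝ (Fin n) := fun p => ∑ i, p.1 i • p.2 i with hφdef
  have hφ : Continuous φ := continuous_finset_sum _ fun i _ =>
    ((continuous_apply i).comp continuous_fst).smul ((continuous_apply i).comp continuous_snd)
  have hD : IsCompact ((stdSimplex ℝ (Fin (n+1))) ×ˢ (Set.univ.pi fun _ : Fin (n+1) => s)) :=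
    (isCompact_stdSimplex ℝ _).prod (isCompact_univ_pi fun _ => hs)
  have himg : convexHull ℝ s
      = φ '' ((stdSimplex ℝ (Fin (n+1))) ×ˢ (Set.univ.pi fun _ : Fin (n+1) => s)) := by
    apply Set.Subset.antisymm
    · intro x hx
      obtain ⟨ι, hι, z, w, hzs, hai, hwpos, hwsum, hcombo⟩ :=
        eq_pos_convex_span_of_mem_convexHull hx
      have hcard : Fintype.card ι ≤ n + 1 := by
        have h1 := hai.card_le_finrank_succ
        have h2 : Module.finrank ℝ (vectorSpan ℝ (Set.range z)) ≤ Module.finrank ℝ (EuclideanSpace ℝ (Fin n)) :=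
          Submodule.finrank_le _
        have h3 : Module.finrank ℝ (EuclideanSpace ℝ (Fin n)) = n := finrank_euclideanSpace_fin
        omega
      obtain ⟨e⟩ : Nonempty (ι ↪ Fin (n+1)) := by
        apply Function.Embedding.nonempty_of_card_le
        simpa using hcard
      set w' : Fin (n+1) → ℝ := fun j => ∑ i ∈ Finset.univ.filter (fun i => e i = j), w i
        with hw'def
      set z' : Fin (n+1) → EuclideanSpace ℝ (Fin n) := fun j => if hj : ∃ i, e i = j then z hj.choose else c₀
        with hz'def
      have hz'eq : ∀ (i : ι), z' (e i) = z i := by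
        intro i
        have hj : ∃ i', e i' = e i := ⟨i, rfl⟩
        have : hj.choose = i := e.injective hj.choose_spec
        simp [hz'def, dif_pos hj, this]
      refine ⟨⟨w', z'⟩, ⟨⟨fun j => Finset.sum_nonneg fun i _ => (hwpos i).le, ?_⟩, ?_⟩, ?_⟩
      · rw [hw'def]
        rw [Finset.sum_fiberwise Finset.univ (fun i => e i) w]
        exact hwsum
      · intro j _
        by_cases hj : ∃ i, e i = j
        · simp only [hz'def, dif_pos hj]
          exact hzs ⟨hj.choose, rfl⟩
        · simp only [hz'def, dif_neg hj]
          exact hc₀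
      · show ∑ j, w' j • z' j = x
        have step1 : ∀ j, w' j • z' j = ∑ i ∈ Finset.univ.filter (fun i => e i = j), w i • z i := by
          intro j
          rw [hw'def, Finset.sum_smul]
          apply Finset.sum_congr rfl
          intro i hi
          have hij : e i = j := (Finset.mem_filter.mp hi).2
          rw [← hij, hz'eq i]
        calc ∑ j, w' j • z' j
            = ∑ j, ∑ i ∈ Finset.univ.filter (fun i => e i = j), w i • z i := by
              exact Finset.sum_congr rfl fun j _ => step1 j
          _ = ∑ i, w i • z i := Finset.sum_fiberwise Finset.univ (fun i => e i) _
          _ = x := hcombo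
    · rintro x ⟨⟨w, z⟩, ⟨⟨hw0, hw1⟩, hz⟩, rfl⟩
      exact mem_convexHull_of_exists_fintype w z hw0 hw1 (fun i => hz i (Set.mem_univ i)) rfl
  rw [himg]
  exact hD.image hφ

lemma exists_ray_mem_interior
    (n k : ℕ) (𝒞 : Set (EuclideanSpace ℝ (Fin n))) (h𝒞 : IsCompact 𝒞)
    (C : Set (EuclideanSpace ℝ (Fin n))) (hC : C = convexHull ℝ 𝒞)
    (hCint : (interior C).Nonempty)
    (F : Set (EuclideanSpace ℝ (Fin n))) (hFface : IsExtreme ℝ C F)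
    (v : Fin (k + 1) → EuclideanSpace ℝ (Fin n))
    (hv : Set.extremePoints ℝ F = Set.range v)
    (hbary : ∑ i, v i = 0)
    (h : EuclideanSpace ℝ (Fin n)) (hnorm : ‖h‖ = 1)
    (hpos : ∀ x ∈ C, 0 ≤ ⟪h, x⟫)
    (hF : F = {x ∈ C | ⟪h, x⟫ = 0})
    (huniq : ∀ (h' : EuclideanSpace ℝ (Fin n)) (γ' : ℝ), ‖h'‖ = 1 →
      (∀ x ∈ C, γ' ≤ ⟪h', x⟫) → F = {x ∈ C | ⟪h', x⟫ = γ'} → h' = h ∧ γ' = 0) :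
    ∃ t : ℝ, t • h ∈ interior C := by
  have hCconv : Convex ℝ C := hC ▸ convex_convexHull ℝ 𝒞
  have h𝒞ne : 𝒞.Nonempty := by
    rw [← convexHull_nonempty_iff (𝕜 := ℝ), ← hC]
    exact hCint.mono interior_subset
  have hCcomp : IsCompact C := hC ▸ isCompact_convexHull_of_isCompact' h𝒞 h𝒞ne
  have hFsub : F ⊆ C := hFface.1
  have hvF : ∀ i, v i ∈ F := fun i => extremePoints_subset (hv ▸ Set.mem_range_self i)
  have hvC : ∀ i, v i ∈ C := fun i => hFsub (hvF i)
  -- Krein–Milman: F is the convex hull of the `v i`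
  have hFconv : Convex ℝ F := by
    rw [hF]
    have : ({x ∈ C | ⟪h, x⟫ = 0} : Set _) = C ∩ {x | ⟪h, x⟫ = 0} := rfl
    rw [this]
    refine hCconv.inter ?_
    intro x hx y hy a b ha hb hab
    simp only [Set.mem_setOf_eq] at hx hy ⊢
    rw [inner_add_right, real_inner_smul_right, real_inner_smul_right, hx, hy]
    ring
  have hFcomp : IsCompact F := by
    rw [hF]
    have : ({x ∈ C | ⟪h, x⟫ = 0} : Set _) = C ∩ {x | ⟪h, x⟫ = 0} := rfl
    rw [this]
    exact hCcomp.inter_right (isClosed_eq (continuous_const.inner continuous_id) continuous_const)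
  have hFeq : F = convexHull ℝ (Set.range v) := by
    have hkm := closure_convexHull_extremePoints hFcomp hFconv
    rw [hv] at hkm
    rw [← hkm, IsClosed.closure_eq (((Set.finite_range v).isCompact_convexHull ℝ).isClosed)]
  by_contra hno
  push_neg at hno
  -- separate the line `span h` from the interior of `C`
  have hdisj : Disjoint (interior C) ((Submodule.span ℝ {h} : Submodule ℝ _) : Set _) := by
    rw [Set.disjoint_left]
    intro x hx hx'
    obtain ⟨t, rfl⟩ := Submodule.mem_span_singleton.mp hx'
    exact hno t hx
  obtain ⟨f, u, hfu, huf⟩ := geometric_hahn_banach_open hCconv.interior isOpen_interior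
    (Submodule.span ℝ {h}).convex hdisj
  have hmem : ∀ t : ℝ, t • h ∈ (Submodule.span ℝ {h} : Submodule ℝ _) := fun t =>
    Submodule.smul_mem _ t (Submodule.mem_span_singleton_self h)
  have hfh : f h = 0 := by
    by_contra hfh
    have := huf _ (hmem ((u - 1) / f h))
    rw [map_smul, smul_eq_mul, div_mul_cancel₀ _ hfh] at this
    linarith
  have hu0 : u ≤ 0 := by
    have := huf 0 (Submodule.zero_mem _)
    simpa using this
  obtain ⟨x₀, hx₀⟩ := hCint
  have hfx₀ : f x₀ < 0 := lt_of_lt_of_le (hfu x₀ hx₀) hu0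
  have hfC : ∀ x ∈ C, f x ≤ 0 := by
    intro x hxC
    by_contra hx
    push_neg at hx
    set b : ℝ := f x / (f x - f x₀) with hbdef
    have hden : 0 < f x - f x₀ := by linarith
    have hb : 0 < b := div_pos hx hden
    have hb1 : b ≤ 1 := by
      rw [div_le_one hden]; linarith
    have ha : (0:ℝ) ≤ 1 - b := by linarith
    have hcombo : (1 - b) • x + b • x₀ ∈ interior C :=
      hCconv.combo_closure_interior_mem_interior (subset_closure hxC) hx₀ ha hb (by ring)
    have hlt := hfu _ hcombo
    rw [map_add, map_smul, map_smul, smul_eq_mul, smul_eq_mul] at hlt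
    have hbmul : b * (f x - f x₀) = f x := div_mul_cancel₀ _ hden.ne'
    have hexp : (1 - b) * f x + b * f x₀ = f x - b * (f x - f x₀) := by ring
    rw [hexp, hbmul] at hlt
    linarith
  -- turn `f` into a unit vector `h'`
  set w0 : EuclideanSpace ℝ (Fin n) := (InnerProductSpace.toDual ℝ _).symm f with hw0def
  have hw0 : ∀ x, ⟪w0, x⟫ = f x := fun x => InnerProductSpace.toDual_symm_apply
  have hw0ne : w0 ≠ 0 := by
    intro hcon
    rw [← hw0 x₀, hcon, inner_zero_left] at hfx₀
    exact absurd hfx₀ (lt_irrefl 0)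
  have hw0norm : (0:ℝ) < ‖w0‖ := norm_pos_iff.mpr hw0ne
  set h' : EuclideanSpace ℝ (Fin n) := -(‖w0‖⁻¹ • w0) with hh'def
  have hinner' : ∀ x, ⟪h', x⟫ = -(‖w0‖⁻¹ * f x) := by
    intro x
    rw [hh'def, inner_neg_left, real_inner_smul_left, hw0]
  have hnorm' : ‖h'‖ = 1 := by
    rw [hh'def, norm_neg, norm_smul, norm_inv, norm_norm, inv_mul_cancel₀ hw0norm.ne']
  have hpos' : ∀ x ∈ C, 0 ≤ ⟪h', x⟫ := by
    intro x hx
    rw [hinner' x]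
    have := hfC x hx
    nlinarith [inv_nonneg.mpr hw0norm.le]
  have h'h : ⟪h', h⟫ = 0 := by rw [hinner' h, hfh, mul_zero, neg_zero]
  -- each `v i` satisfies `⟪h', v i⟫ = 0`, hence all of `F` does
  have hsumv : ∑ i, ⟪h', v i⟫ = 0 := by
    rw [← inner_sum, hbary, inner_zero_right]
  have hvzero : ∀ i, ⟪h', v i⟫ = 0 := by
    have := (Finset.sum_eq_zero_iff_of_nonneg
      (fun i _ => hpos' (v i) (hvC i))).mp hsumv
    exact fun i => this i (Finset.mem_univ i)
  have hFh' : ∀ x ∈ F, ⟪h', x⟫ = 0 := by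
    intro x hx
    rw [hFeq] at hx
    have hconvset : Convex ℝ {x : EuclideanSpace ℝ (Fin n) | ⟪h', x⟫ = 0} := by
      intro a ha' b' hb' p q hp hq hpq
      simp only [Set.mem_setOf_eq] at ha' hb' ⊢
      rw [inner_add_right, real_inner_smul_right, real_inner_smul_right, ha', hb']
      ring
    have : convexHull ℝ (Set.range v) ⊆ {x | ⟪h', x⟫ = 0} :=
      convexHull_min (by rintro _ ⟨i, rfl⟩; exact hvzero i) hconvset
    exact this hx
  -- apply uniqueness to the normalized `h + h'`
  by_cases hc : h + h' = 0
  · have : h' = -h := by linear_combination (norm := module) hc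
    rw [this, inner_neg_left, real_inner_self_eq_norm_sq, hnorm] at h'h
    norm_num at h'h
  · have hcpos : (0:ℝ) < ‖h + h'‖ := norm_pos_iff.mpr hc
    set h'' : EuclideanSpace ℝ (Fin n) := ‖h + h'‖⁻¹ • (h + h') with hh''def
    have hn'' : ‖h''‖ = 1 := by
      rw [hh''def, norm_smul, norm_inv, norm_norm, inv_mul_cancel₀ hcpos.ne']
    have hin'' : ∀ x, ⟪h'', x⟫ = ‖h + h'‖⁻¹ * (⟪h, x⟫ + ⟪h', x⟫) := by
      intro x
      rw [hh''def, real_inner_smul_left, inner_add_left]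
    have hpos'' : ∀ x ∈ C, (0:ℝ) ≤ ⟪h'', x⟫ := by
      intro x hx
      rw [hin'' x]
      have := hpos x hx
      have := hpos' x hx
      positivity
    have hF'' : F = {x ∈ C | ⟪h'', x⟫ = 0} := by
      ext x
      constructor
      · intro hx
        refine ⟨hFsub hx, ?_⟩
        have h1 : ⟪h, x⟫ = 0 := (hF ▸ hx).2
        have h2 : ⟪h', x⟫ = 0 := hFh' x hx
        rw [hin'' x, h1, h2]; ring
      · rintro ⟨hxC, hx0⟩
        rw [hin'' x] at hx0
        have hsum0 : ⟪h, x⟫ + ⟪h', x⟫ = 0 := by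
          rcases mul_eq_zero.mp hx0 with hcon | hok
          · exact absurd hcon (by positivity)
          · exact hok
        have h1 : ⟪h, x⟫ = 0 := by
          have := hpos x hxC
          have := hpos' x hxC
          linarith
        rw [hF]; exact ⟨hxC, h1⟩
    obtain ⟨heq, -⟩ := huniq h'' 0 hn'' (fun x hx => hpos'' x hx) hF''
    have hval : ⟪h', h''⟫ = ‖h + h'‖⁻¹ := by
      rw [hh''def, real_inner_smul_right, inner_add_right, h'h,
        real_inner_self_eq_norm_sq, hnorm']
      ring
    rw [heq, h'h] at hval
    exact absurd hval.symm (inv_pos.mpr hcpos).ne'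

/-- Let `𝒞` be compact in `ℝⁿ` with `C = conv 𝒞` full-dimensional.  Let
`F` be a uniquely exposed face of `C` whose barycenter of extreme points is the origin,
exposed by the unique halfspace `{x : ⟪h,x⟫ ≥ 0}` with `‖h‖ = 1`.  Let `ε ν ↘ 0` and let
`𝒜 ν ⊆ 𝒞` be `ε ν`-approximations with `A ν = conv (𝒜 ν)`.  Then for all sufficiently
small `ε ν`, the line spanned by `h` meets the interior of `A ν`. -/
theorem span_of_normal_meets_interior_of_approximating_polytopes
    (n k : ℕ) (𝒞 : Set (EuclideanSpace ℝ (Fin n))) (h𝒞 : IsCompact 𝒞)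
    (C : Set (EuclideanSpace ℝ (Fin n))) (hC : C = convexHull ℝ 𝒞)
    (hCint : (interior C).Nonempty)
    (F : Set (EuclideanSpace ℝ (Fin n))) (hFface : IsExtreme ℝ C F)
    (v : Fin (k + 1) → EuclideanSpace ℝ (Fin n))
    (hv : Set.extremePoints ℝ F = Set.range v)
    -- the barycenter of the extreme points of `F` is the origin
    (hbary : ∑ i, v i = 0)
    (h : EuclideanSpace ℝ (Fin n)) (hnorm : ‖h‖ = 1)
    (hpos : ∀ x ∈ C, 0 ≤ ⟪h, x⟫)
    (hF : F = {x ∈ C | ⟪h, x⟫ = 0})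
    -- `F` is uniquely exposed: `(h, 0)` is the only exposing pair
    (huniq : ∀ (h' : EuclideanSpace ℝ (Fin n)) (γ' : ℝ), ‖h'‖ = 1 →
      (∀ x ∈ C, γ' ≤ ⟪h', x⟫) → F = {x ∈ C | ⟪h', x⟫ = γ'} → h' = h ∧ γ' = 0)
    (ε : ℕ → ℝ) (hεpos : ∀ ν, 0 < ε ν) (hεanti : StrictAnti ε)
    (hεlim : Filter.Tendsto ε Filter.atTop (nhds 0))
    (𝒜 : ℕ → Set (EuclideanSpace ℝ (Fin n)))
    (h𝒜fin : ∀ ν, (𝒜 ν).Finite) (h𝒜sub : ∀ ν, 𝒜 ν ⊆ 𝒞)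
    (h𝒜approx : ∀ ν, ∀ y ∈ 𝒞, ∃ x ∈ 𝒜 ν, ‖y - x‖ ≤ ε ν)
    (A : ℕ → Set (EuclideanSpace ℝ (Fin n)))
    (hA : ∀ ν, A ν = convexHull ℝ (𝒜 ν)) :
    ∃ ν₀ : ℕ, ∀ ν ≥ ν₀, ∃ t : ℝ, t • h ∈ interior (A ν) := by
  obtain ⟨t₀, ht₀⟩ := exists_ray_mem_interior n k 𝒞 h𝒞 C hC hCint F hFface v hv hbary
    h hnorm hpos hF huniq
  obtain ⟨δ, hδpos, hball⟩ := Metric.isOpen_iff.mp isOpen_interior _ ht₀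
  have hballC : Metric.ball (t₀ • h) δ ⊆ C := hball.trans interior_subset
  have h𝒞ne : 𝒞.Nonempty := by
    rw [← convexHull_nonempty_iff (𝕜 := ℝ), ← hC]
    exact hCint.mono interior_subset
  obtain ⟨c₀, hc₀⟩ := h𝒞ne
  have hev : ∀ᶠ ν in Filter.atTop, ε ν < δ / 4 :=
    hεlim.eventually_lt_const (by positivity)
  obtain ⟨ν₀, hν₀⟩ := Filter.eventually_atTop.mp hev
  refine ⟨ν₀, fun ν hν => ⟨t₀, ?_⟩⟩
  have hεδ : ε ν < δ / 4 := hν₀ ν hν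
  have hεp : 0 < ε ν := hεpos ν
  have hAconv : Convex ℝ (A ν) := (hA ν) ▸ convex_convexHull ℝ _
  have hAclosed : IsClosed (A ν) := (hA ν) ▸ ((h𝒜fin ν).isCompact_convexHull ℝ).isClosed
  -- every point of `C` is within `ε ν` of `A ν`
  have hCsub : C ⊆ A ν + Metric.closedBall (0 : EuclideanSpace ℝ (Fin n)) (ε ν) := by
    rw [hC]
    apply convexHull_min
    · intro y hy
      obtain ⟨x, hx, hxy⟩ := h𝒜approx ν y hy
      refine ⟨x, (hA ν) ▸ subset_convexHull ℝ _ hx, y - x, ?_, by module⟩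
      simpa [Metric.mem_closedBall, dist_eq_norm] using hxy
    · exact (((hA ν) ▸ convex_convexHull ℝ (𝒜 ν)).add (convex_closedBall _ _))
  -- the small ball around `t₀ • h` is contained in `A ν`
  have hsub : Metric.ball (t₀ • h) (δ / 4) ⊆ A ν := by
    intro z hz
    by_contra hzA
    obtain ⟨f, u, hfu, huf⟩ := geometric_hahn_banach_closed_point hAconv hAclosed hzA
    set w0 : EuclideanSpace ℝ (Fin n) := (InnerProductSpace.toDual ℝ _).symm f with hw0def
    have hw0 : ∀ x, ⟪w0, x⟫ = f x := fun x => InnerProductSpace.toDual_symm_apply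
    have hAne : (A ν).Nonempty := by
      obtain ⟨x, hx, -⟩ := h𝒜approx ν c₀ hc₀
      exact ⟨x, (hA ν) ▸ subset_convexHull ℝ _ hx⟩
    obtain ⟨a₀, ha₀⟩ := hAne
    have hw0ne : w0 ≠ 0 := by
      intro hcon
      have h1 := hfu a₀ ha₀
      have h2 : f a₀ = 0 := by rw [← hw0 a₀, hcon, inner_zero_left]
      have h3 : f z = 0 := by rw [← hw0 z, hcon, inner_zero_left]
      rw [h2] at h1; rw [h3] at huf; linarith
    have hw0norm : (0:ℝ) < ‖w0‖ := norm_pos_iff.mpr hw0ne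
    set y : EuclideanSpace ℝ (Fin n) := z + (ε ν) • (‖w0‖⁻¹ • w0) with hydef
    have hyC : y ∈ C := by
      apply hballC
      rw [Metric.mem_ball, dist_eq_norm] at hz ⊢
      have : y - t₀ • h = (z - t₀ • h) + (ε ν) • (‖w0‖⁻¹ • w0) := by rw [hydef]; abel
      rw [this]
      calc ‖(z - t₀ • h) + (ε ν) • (‖w0‖⁻¹ • w0)‖
          ≤ ‖z - t₀ • h‖ + ‖(ε ν) • (‖w0‖⁻¹ • w0)‖ := norm_add_le _ _
        _ ≤ ‖z - t₀ • h‖ + ε ν := by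
            rw [norm_smul, norm_smul, norm_inv, norm_norm, Real.norm_eq_abs,
              abs_of_pos hεp, inv_mul_cancel₀ hw0norm.ne', mul_one]
        _ < δ / 4 + δ / 4 := by linarith
        _ ≤ δ := by linarith
    obtain ⟨a, ha, b, hb, hab⟩ := hCsub hyC
    have hfy : f y = f z + ε ν * ‖w0‖ := by
      rw [hydef, map_add, map_smul, map_smul, smul_eq_mul, smul_eq_mul, ← hw0 w0,
        real_inner_self_eq_norm_sq]
      field_simp
    have hfy2 : f y = f a + ⟪w0, b⟫ := by
      rw [← hab, map_add, hw0]
    have hwb : ⟪w0, b⟫ ≤ ‖w0‖ * ε ν := by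
      calc ⟪w0, b⟫ ≤ ‖w0‖ * ‖b‖ := real_inner_le_norm _ _
        _ ≤ ‖w0‖ * ε ν := by
            apply mul_le_mul_of_nonneg_left _ hw0norm.le
            simpa [Metric.mem_closedBall, dist_eq_norm] using hb
    have hfa := hfu a ha
    nlinarith
  apply mem_interior.mpr
  exact ⟨Metric.ball (t₀ • h) (δ / 4), hsub, Metric.isOpen_ball,
    Metric.mem_ball_self (by positivity)⟩
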